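/- arXiv:2202.12372 — 4 statements merged into one kernel-verified Lean document; each statement's English description precedes it below -/
import Mathlib

section
/- Let m ≥ 2 be an integer and Q(z) = (1+z)^{2+2m}/(z(1−z)^{2m}). Then for all z ∈ ℂ∖{0,1}: Q(z) = z + (4m+2) + (8m(m+1)+1)/z + Q₂(z), where Q₂(z) = (8·C(2m,3) + 16m)/(z(z−1)) + Σ_{j=4}^{2m} C(2m,j)·2^j/(z(z−1)^{j−2}) + Σ_{j=2}^{2m} 4·C(2m,j)·2^j/(z−1)^j. Moreover, for every real r > 1 and every z with |z| ≥ r, |Q₂(z)| ≤ Q_{2,max}(r) := (8·C(2m,3) + 16m)/(r(r−1)) + (2·(2m)(2m−1)(2m−2)(2m−3))/(3r(r−1)²)·((r+1)/(r−1))^{2m−4} + (8·(2m)(2m−1))/(r−1)²·((r+1)/(r−1))^{2m−2}. -/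
set_option maxHeartbeats 1000000


lemma part1 (m : ℕ) (hm : 2 ≤ m) (z : ℂ) (hz0 : z ≠ 0) (hz1 : z ≠ 1) :
    (1 + z) ^ (2 + 2 * m) / (z * (1 - z) ^ (2 * m)) =
      z + (4 * (m : ℂ) + 2) + (8 * (m : ℂ) * ((m : ℂ) + 1) + 1) / z +
      ((8 * ((2 * m).choose 3 : ℂ) + 16 * (m : ℂ)) / (z * (z - 1)) +
       ∑ j ∈ Finset.Icc 4 (2 * m), ((2 * m).choose j : ℂ) * 2 ^ j / (z * (z - 1) ^ (j - 2)) +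
       ∑ j ∈ Finset.Icc 2 (2 * m), 4 * ((2 * m).choose j : ℂ) * 2 ^ j / ((z - 1) ^ j)) := by
  have hw : z - 1 ≠ 0 := sub_ne_zero.mpr hz1
  have hX : z * (z - 1) ^ (2 * m) ≠ 0 := mul_ne_zero hz0 (pow_ne_zero _ hw)
  have E1 : (1 + z) ^ (2 + 2 * m) / (z * (1 - z) ^ (2 * m)) =
      ∑ j ∈ Finset.range (2 * m + 1), ((2 * m).choose j : ℂ) * 2 ^ j *
        ((z - 1) ^ 2 / (z * (z - 1) ^ j) + 4 / (z - 1) ^ j) := by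
    have hneg : (1 - z) ^ (2 * m) = (z - 1) ^ (2 * m) := by
      rw [show (1 : ℂ) - z = -(z - 1) by ring, Even.neg_pow (even_two_mul m)]
    rw [hneg, div_eq_iff hX, Finset.sum_mul]
    have hterm : ∀ j ∈ Finset.range (2 * m + 1),
        ((2 * m).choose j : ℂ) * 2 ^ j * ((z - 1) ^ 2 / (z * (z - 1) ^ j) + 4 / (z - 1) ^ j)
          * (z * (z - 1) ^ (2 * m)) =
        (z + 1) ^ 2 * ((2 : ℂ) ^ j * (z - 1) ^ (2 * m - j) * ((2 * m).choose j)) := by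
      intro j hj
      have hj' : j ≤ 2 * m := Nat.lt_succ_iff.mp (Finset.mem_range.mp hj)
      have hsp : (z - 1) ^ (2 * m) = (z - 1) ^ j * (z - 1) ^ (2 * m - j) := by
        rw [← pow_add]; congr 1; omega
      rw [hsp]
      field_simp
      ring
    rw [Finset.sum_congr rfl hterm, ← Finset.mul_sum, ← add_pow]
    have h2 : (2 : ℂ) + (z - 1) = z + 1 := by ring
    rw [h2]
    ring
  rw [E1]
  have split1 : ∀ j ∈ Finset.range (2 * m + 1),
      ((2 * m).choose j : ℂ) * 2 ^ j * ((z - 1) ^ 2 / (z * (z - 1) ^ j) + 4 / (z - 1) ^ j)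
        = ((2 * m).choose j : ℂ) * 2 ^ j * ((z - 1) ^ 2 / (z * (z - 1) ^ j))
          + 4 * ((2 * m).choose j : ℂ) * 2 ^ j / (z - 1) ^ j := by
    intro j _; ring
  rw [Finset.sum_congr rfl split1, Finset.sum_add_distrib]
  have hP : ∑ j ∈ Finset.range (2 * m + 1),
        ((2 * m).choose j : ℂ) * 2 ^ j * ((z - 1) ^ 2 / (z * (z - 1) ^ j))
      = (∑ j ∈ Finset.range 4, ((2 * m).choose j : ℂ) * 2 ^ j * ((z - 1) ^ 2 / (z * (z - 1) ^ j)))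
        + ∑ j ∈ Finset.Icc 4 (2 * m), ((2 * m).choose j : ℂ) * 2 ^ j / (z * (z - 1) ^ (j - 2)) := by
    rw [Finset.range_eq_Ico,
      ← Finset.sum_Ico_consecutive _ (by omega : (0:ℕ) ≤ 4) (by omega : 4 ≤ 2 * m + 1),
      show Finset.Ico 4 (2 * m + 1) = Finset.Icc 4 (2 * m) from Finset.Ico_add_one_right_eq_Icc _ _]
    congr 1
    apply Finset.sum_congr rfl
    intro j hj
    obtain ⟨hj4, hjn⟩ := Finset.mem_Icc.mp hj
    have hsp : (z - 1) ^ j = (z - 1) ^ (j - 2) * (z - 1) ^ 2 := by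
      rw [← pow_add]; congr 1; omega
    rw [hsp]
    field_simp
  have hS : ∑ j ∈ Finset.range (2 * m + 1), 4 * ((2 * m).choose j : ℂ) * 2 ^ j / (z - 1) ^ j
      = (∑ j ∈ Finset.range 2, 4 * ((2 * m).choose j : ℂ) * 2 ^ j / (z - 1) ^ j)
        + ∑ j ∈ Finset.Icc 2 (2 * m), 4 * ((2 * m).choose j : ℂ) * 2 ^ j / (z - 1) ^ j := by
    rw [Finset.range_eq_Ico,
      ← Finset.sum_Ico_consecutive _ (by omega : (0:ℕ) ≤ 2) (by omega : 2 ≤ 2 * m + 1),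
      show Finset.Ico 2 (2 * m + 1) = Finset.Icc 2 (2 * m) from Finset.Ico_add_one_right_eq_Icc _ _]
    rw [Finset.range_eq_Ico]
  rw [hP, hS]
  have hC2n : (2 * m).choose 2 = m * (2 * m - 1) := by
    have h1 : 2 * ((2 * m).choose 2) = 2 * m * (2 * m - 1) := by
      have := Nat.descFactorial_eq_factorial_mul_choose (2 * m) 2
      have h2 : Nat.factorial 2 = 2 := by decide
      have h3 : (2 * m).descFactorial 2 = (2 * m - 1) * (2 * m) := by
        simp [Nat.descFactorial_succ, Nat.descFactorial_zero]
      rw [show 2 * m * (2 * m - 1) = (2 * m - 1) * (2 * m) from Nat.mul_comm _ _, ← h3, this, h2]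
    have h2 : 2 * m * (2 * m - 1) = 2 * (m * (2 * m - 1)) := by ring
    omega
  have hC2 : ((2 * m).choose 2 : ℂ) = (m : ℂ) * (2 * (m : ℂ) - 1) := by
    rw [hC2n]
    push_cast [Nat.cast_sub (by omega : 1 ≤ 2 * m)]
    ring
  have hexp : (∑ j ∈ Finset.range 4,
        ((2 * m).choose j : ℂ) * 2 ^ j * ((z - 1) ^ 2 / (z * (z - 1) ^ j)))
      + (∑ j ∈ Finset.range 2, 4 * ((2 * m).choose j : ℂ) * 2 ^ j / (z - 1) ^ j)
      = z + (4 * (m : ℂ) + 2) + (8 * (m : ℂ) * ((m : ℂ) + 1) + 1) / z +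
        (8 * ((2 * m).choose 3 : ℂ) + 16 * (m : ℂ)) / (z * (z - 1)) := by
    have hzw : z * (z - 1) ≠ 0 := mul_ne_zero hz0 hw
    have h1 : (z - 1) ^ 2 / (z * (z - 1)) = (z - 1) / z := by
      rw [div_eq_div_iff (by simpa using hzw) hz0]; ring
    have h2 : (z - 1) ^ 2 / (z * (z - 1) ^ 2) = 1 / z := by
      rw [div_eq_div_iff (mul_ne_zero hz0 (pow_ne_zero _ hw)) hz0]; ring
    have h3 : (z - 1) ^ 2 / (z * (z - 1) ^ 3) = 1 / (z * (z - 1)) := by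
      rw [div_eq_div_iff (mul_ne_zero hz0 (pow_ne_zero _ hw)) hzw]; ring
    simp only [Finset.sum_range_succ, Finset.sum_range_zero, Nat.choose_zero_right,
      Nat.choose_one_right, hC2, Nat.cast_one, Nat.cast_mul, Nat.cast_ofNat,
      pow_zero, pow_one, mul_one, div_one]
    rw [h1, h2, h3]
    simp only [div_eq_mul_inv, mul_inv]
    linear_combination (z - 2 + 4*(m:ℂ) - 16*(m:ℂ)*(z-1)⁻¹) * mul_inv_cancel₀ hz0 +
      (16*(m:ℂ)*z⁻¹) * mul_inv_cancel₀ hw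
  linear_combination hexp


lemma choose_le_aux' {n s j : ℕ} (hsj : s ≤ j) (hjn : j ≤ n) :
    n.choose j ≤ n.choose s * (n - s).choose (j - s) := by
  calc n.choose j ≤ n.choose j * j.choose s :=
        Nat.le_mul_of_pos_right _ (Nat.choose_pos hsj)
    _ = n.choose s * (n - s).choose (j - s) := Nat.choose_mul hsj

lemma sum_choose_bound' (n s : ℕ) (hsn : s ≤ n) (x : ℝ) (hx : 0 ≤ x) :
    ∑ j ∈ Finset.Icc s n, (n.choose j : ℝ) * x ^ j ≤
      (n.choose s : ℝ) * x ^ s * (1 + x) ^ (n - s) := by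
  rw [← Finset.Ico_add_one_right_eq_Icc, Finset.sum_Ico_eq_sum_range,
    show n + 1 - s = (n - s) + 1 from by omega]
  calc ∑ k ∈ Finset.range (n - s + 1), (n.choose (s + k) : ℝ) * x ^ (s + k)
      ≤ ∑ k ∈ Finset.range (n - s + 1),
          (n.choose s : ℝ) * ((n - s).choose k : ℝ) * x ^ (s + k) := by
        apply Finset.sum_le_sum
        intro k hk
        have hk' : k ≤ n - s := Nat.lt_succ_iff.mp (Finset.mem_range.mp hk)
        have h := choose_le_aux' (s := s) (j := s + k) (n := n) (by omega) (by omega)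
        rw [Nat.add_sub_cancel_left] at h
        have : (n.choose (s + k) : ℝ) ≤ (n.choose s : ℝ) * ((n - s).choose k : ℝ) := by
          exact_mod_cast h
        exact mul_le_mul_of_nonneg_right this (pow_nonneg hx _)
    _ = (n.choose s : ℝ) * x ^ s *
          ∑ k ∈ Finset.range (n - s + 1), ((n - s).choose k : ℝ) * x ^ k := by
        rw [Finset.mul_sum]
        apply Finset.sum_congr rfl
        intro k _
        rw [pow_add]; ring
    _ = (n.choose s : ℝ) * x ^ s * (1 + x) ^ (n - s) := by
        congr 1
        rw [add_comm (1:ℝ) x, add_pow]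
        apply Finset.sum_congr rfl
        intro k _
        simp [mul_comm]

lemma descFac4' (n : ℕ) :
    24 * n.choose 4 = n * (n - 1) * (n - 2) * (n - 3) := by
  have h := Nat.descFactorial_eq_factorial_mul_choose n 4
  have h4 : Nat.factorial 4 = 24 := by decide
  have : n.descFactorial 4 = (n - 3) * ((n - 2) * ((n - 1) * n)) := by
    simp [Nat.descFactorial_succ, Nat.descFactorial_zero]
  rw [← h4, ← h, this]; ring

lemma descFac2' (n : ℕ) :
    2 * n.choose 2 = n * (n - 1) := by
  have h := Nat.descFactorial_eq_factorial_mul_choose n 2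
  have h2 : Nat.factorial 2 = 2 := by decide
  have : n.descFactorial 2 = (n - 1) * n := by
    simp [Nat.descFactorial_succ, Nat.descFactorial_zero]
  rw [show n * (n - 1) = (n - 1) * n from Nat.mul_comm _ _, ← this, h, h2]

lemma part2 (m : ℕ) (hm : 2 ≤ m) (r : ℝ) (hr : 1 < r) (z : ℂ)
    (hz : r ≤ ‖z‖) :
    ‖(8 * ((2 * m).choose 3 : ℂ) + 16 * (m : ℂ)) / (z * (z - 1)) +
      ∑ j ∈ Finset.Icc 4 (2 * m), ((2 * m).choose j : ℂ) * 2 ^ j / (z * (z - 1) ^ (j - 2)) +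
      ∑ j ∈ Finset.Icc 2 (2 * m), 4 * ((2 * m).choose j : ℂ) * 2 ^ j / ((z - 1) ^ j)‖
    ≤ (8 * ((2 * m).choose 3 : ℝ) + 16 * (m : ℝ)) / (r * (r - 1)) +
      2 * (2 * (m : ℝ)) * (2 * (m : ℝ) - 1) * (2 * (m : ℝ) - 2) * (2 * (m : ℝ) - 3) /
          (3 * r * (r - 1) ^ 2) * ((r + 1) / (r - 1)) ^ (2 * m - 4) +
      8 * (2 * (m : ℝ)) * (2 * (m : ℝ) - 1) / ((r - 1) ^ 2) *
          ((r + 1) / (r - 1)) ^ (2 * m - 2) := by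
  have hr0 : (0:ℝ) < r := lt_trans one_pos hr
  have hr1 : (0:ℝ) < r - 1 := by linarith
  have hrz : (0:ℝ) < ‖z‖ := lt_of_lt_of_le hr0 hz
  have hz1abs : r - 1 ≤ ‖z - 1‖ := by
    have h := norm_add_le (z - 1) 1
    simp only [sub_add_cancel, norm_one] at h
    linarith
  have hw0 : (0:ℝ) < ‖z - 1‖ := lt_of_lt_of_le hr1 hz1abs
  have hn4 : 4 ≤ 2 * m := by omega
  set x : ℝ := 2 / (r - 1) with hxdef
  have hx0 : 0 ≤ x := by positivity
  have h1x : 1 + x = (r + 1) / (r - 1) := by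
    rw [hxdef, eq_div_iff hr1.ne']
    field_simp
    ring
  -- cast facts
  have hC4R : ((2 * m).choose 4 : ℝ) * 24 =
      2 * (m:ℝ) * (2 * (m:ℝ) - 1) * (2 * (m:ℝ) - 2) * (2 * (m:ℝ) - 3) := by
    have h := descFac4' (2 * m)
    have h' : ((24 * (2*m).choose 4 : ℕ) : ℝ) = ((2*m * (2*m - 1) * (2*m - 2) * (2*m - 3) : ℕ) : ℝ) := by
      exact_mod_cast congrArg (Nat.cast (R := ℝ)) h
    push_cast [Nat.cast_sub (by omega : 1 ≤ 2*m), Nat.cast_sub (by omega : 2 ≤ 2*m),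
      Nat.cast_sub (by omega : 3 ≤ 2*m)] at h'
    linarith
  have hC2R : ((2 * m).choose 2 : ℝ) * 2 = 2 * (m:ℝ) * (2 * (m:ℝ) - 1) := by
    have h := descFac2' (2 * m)
    have h' : ((2 * (2*m).choose 2 : ℕ) : ℝ) = ((2*m * (2*m - 1) : ℕ) : ℝ) := by
      exact_mod_cast congrArg (Nat.cast (R := ℝ)) h
    push_cast [Nat.cast_sub (by omega : 1 ≤ 2*m)] at h'
    linarith
  refine le_trans (norm_add_le _ _) ?_
  refine le_trans (add_le_add_left (norm_add_le _ _) _) ?_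
  refine add_le_add (add_le_add ?_ ?_) ?_
  · -- term 1
    have hnum : (8 * ((2 * m).choose 3 : ℂ) + 16 * (m : ℂ))
        = ((8 * ((2 * m).choose 3 : ℝ) + 16 * (m : ℝ) : ℝ) : ℂ) := by push_cast; ring
    rw [hnum, norm_div, norm_mul, Complex.norm_real, Real.norm_eq_abs,
      abs_of_nonneg (by positivity : (0:ℝ) ≤ 8 * ((2 * m).choose 3 : ℝ) + 16 * (m : ℝ))]
    apply div_le_div_of_nonneg_left (by positivity) (by positivity)
    exact mul_le_mul hz hz1abs hr1.le hrz.le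
  · -- term 2 : middle sum
    calc ‖∑ j ∈ Finset.Icc 4 (2 * m), ((2 * m).choose j : ℂ) * 2 ^ j / (z * (z - 1) ^ (j - 2))‖
        ≤ ∑ j ∈ Finset.Icc 4 (2 * m),
            ‖((2 * m).choose j : ℂ) * 2 ^ j / (z * (z - 1) ^ (j - 2))‖ :=
          norm_sum_le _ _
      _ ≤ ∑ j ∈ Finset.Icc 4 (2 * m), ((2 * m).choose j : ℝ) * x ^ j * ((r - 1) ^ 2 / r) := by
          apply Finset.sum_le_sum
          intro j hj
          obtain ⟨hj4, hjn⟩ := Finset.mem_Icc.mp hj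
          rw [norm_div, norm_mul, norm_mul, norm_pow, norm_pow, Complex.norm_natCast,
            Complex.norm_two]
          have hle : r * (r - 1) ^ (j - 2) ≤ ‖z‖ * ‖z - 1‖ ^ (j - 2) := by
            apply mul_le_mul hz (pow_le_pow_left₀ hr1.le hz1abs _) (by positivity) hrz.le
          have hstep : ((2 * m).choose j : ℝ) * 2 ^ j / (‖z‖ * ‖z - 1‖ ^ (j - 2))
              ≤ ((2 * m).choose j : ℝ) * 2 ^ j / (r * (r - 1) ^ (j - 2)) :=
            div_le_div_of_nonneg_left (by positivity) (by positivity) hle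
          refine le_trans hstep (le_of_eq ?_)
          have hsp : (r - 1) ^ j = (r - 1) ^ (j - 2) * (r - 1) ^ 2 := by
            rw [← pow_add]; congr 1; omega
          rw [hxdef, div_pow, hsp]
          field_simp
      _ = ((r - 1) ^ 2 / r) * ∑ j ∈ Finset.Icc 4 (2 * m), ((2 * m).choose j : ℝ) * x ^ j := by
          rw [Finset.mul_sum]; apply Finset.sum_congr rfl; intro j _; ring
      _ ≤ ((r - 1) ^ 2 / r) * (((2 * m).choose 4 : ℝ) * x ^ 4 * (1 + x) ^ (2 * m - 4)) := by
          apply mul_le_mul_of_nonneg_left (sum_choose_bound' (2 * m) 4 hn4 x hx0) (by positivity)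
      _ = 2 * (2 * (m : ℝ)) * (2 * (m : ℝ) - 1) * (2 * (m : ℝ) - 2) * (2 * (m : ℝ) - 3) /
            (3 * r * (r - 1) ^ 2) * ((r + 1) / (r - 1)) ^ (2 * m - 4) := by
          rw [h1x]
          have hco : ((r - 1) ^ 2 / r) * (((2 * m).choose 4 : ℝ) * x ^ 4) =
              2 * (2 * (m : ℝ)) * (2 * (m : ℝ) - 1) * (2 * (m : ℝ) - 2) * (2 * (m : ℝ) - 3) /
                (3 * r * (r - 1) ^ 2) := by
            rw [hxdef, div_pow]
            field_simp
            linear_combination (1/4:ℝ) * hC4R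
          calc ((r - 1) ^ 2 / r) * (((2 * m).choose 4 : ℝ) * x ^ 4 * ((r + 1) / (r - 1)) ^ (2 * m - 4))
              = (((r - 1) ^ 2 / r) * (((2 * m).choose 4 : ℝ) * x ^ 4)) * ((r + 1) / (r - 1)) ^ (2 * m - 4) := by ring
            _ = _ := by rw [hco]
  · -- term 3 : last sum
    calc ‖∑ j ∈ Finset.Icc 2 (2 * m), 4 * ((2 * m).choose j : ℂ) * 2 ^ j / ((z - 1) ^ j)‖
        ≤ ∑ j ∈ Finset.Icc 2 (2 * m),
            ‖4 * ((2 * m).choose j : ℂ) * 2 ^ j / ((z - 1) ^ j)‖ :=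
          norm_sum_le _ _
      _ ≤ ∑ j ∈ Finset.Icc 2 (2 * m), 4 * (((2 * m).choose j : ℝ) * x ^ j) := by
          apply Finset.sum_le_sum
          intro j hj
          obtain ⟨hj2, hjn⟩ := Finset.mem_Icc.mp hj
          rw [norm_div, norm_mul, norm_mul, norm_pow, norm_pow, Complex.norm_natCast,
            Complex.norm_two, Complex.norm_ofNat]
          have hle : (r - 1) ^ j ≤ ‖z - 1‖ ^ j := pow_le_pow_left₀ hr1.le hz1abs _
          have hstep : 4 * ((2 * m).choose j : ℝ) * 2 ^ j / (‖z - 1‖ ^ j)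
              ≤ 4 * ((2 * m).choose j : ℝ) * 2 ^ j / ((r - 1) ^ j) :=
            div_le_div_of_nonneg_left (by positivity) (by positivity) hle
          refine le_trans hstep (le_of_eq ?_)
          rw [hxdef, div_pow]
          field_simp
      _ = 4 * ∑ j ∈ Finset.Icc 2 (2 * m), ((2 * m).choose j : ℝ) * x ^ j := by
          rw [Finset.mul_sum]
      _ ≤ 4 * (((2 * m).choose 2 : ℝ) * x ^ 2 * (1 + x) ^ (2 * m - 2)) := by
          apply mul_le_mul_of_nonneg_left (sum_choose_bound' (2 * m) 2 (by omega) x hx0) (by norm_num)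
      _ = 8 * (2 * (m : ℝ)) * (2 * (m : ℝ) - 1) / ((r - 1) ^ 2) *
            ((r + 1) / (r - 1)) ^ (2 * m - 2) := by
          rw [h1x]
          have hco : 4 * (((2 * m).choose 2 : ℝ) * x ^ 2) =
              8 * (2 * (m : ℝ)) * (2 * (m : ℝ) - 1) / ((r - 1) ^ 2) := by
            rw [hxdef, div_pow]
            field_simp
            linear_combination (4:ℝ) * hC2R
          calc 4 * (((2 * m).choose 2 : ℝ) * x ^ 2 * ((r + 1) / (r - 1)) ^ (2 * m - 2))
              = (4 * (((2 * m).choose 2 : ℝ) * x ^ 2)) * ((r + 1) / (r - 1)) ^ (2 * m - 2) := by ring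
            _ = _ := by rw [hco]


/-- expansion `Q(z) = z + (4m+2) + (8m(m+1)+1)/z + Q₂(z)` with the explicit
remainder `Q₂`, together with the bound `|Q₂(z)| ≤ Q_{2,max}(r)` for `|z| ≥ r > 1`. -/
theorem stmt_3 (m : ℕ) (hm : 2 ≤ m)
    (Q Q2 : ℂ → ℂ)
    (hQ : ∀ z : ℂ, Q z = (1 + z) ^ (2 + 2 * m) / (z * (1 - z) ^ (2 * m)))
    (hQ2 : ∀ z : ℂ, Q2 z =
      (8 * ((2 * m).choose 3 : ℂ) + 16 * (m : ℂ)) / (z * (z - 1)) +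
      ∑ j ∈ Finset.Icc 4 (2 * m), ((2 * m).choose j : ℂ) * 2 ^ j / (z * (z - 1) ^ (j - 2)) +
      ∑ j ∈ Finset.Icc 2 (2 * m), 4 * ((2 * m).choose j : ℂ) * 2 ^ j / ((z - 1) ^ j))
    (Q2max : ℝ → ℝ)
    (hQ2max : ∀ r : ℝ, Q2max r =
      (8 * ((2 * m).choose 3 : ℝ) + 16 * (m : ℝ)) / (r * (r - 1)) +
      2 * (2 * (m : ℝ)) * (2 * (m : ℝ) - 1) * (2 * (m : ℝ) - 2) * (2 * (m : ℝ) - 3) /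
          (3 * r * (r - 1) ^ 2) * ((r + 1) / (r - 1)) ^ (2 * m - 4) +
      8 * (2 * (m : ℝ)) * (2 * (m : ℝ) - 1) / ((r - 1) ^ 2) *
          ((r + 1) / (r - 1)) ^ (2 * m - 2)) :
    (∀ z : ℂ, z ≠ 0 → z ≠ 1 →
      Q z = z + (4 * (m : ℂ) + 2) + (8 * (m : ℂ) * ((m : ℂ) + 1) + 1) / z + Q2 z) ∧
    (∀ r : ℝ, 1 < r → ∀ z : ℂ, r ≤ ‖z‖ → ‖Q2 z‖ ≤ Q2max r) := by
  constructor
  · intro z hz0 hz1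
    rw [hQ z, hQ2 z]
    exact part1 m hm z hz0 hz1
  · intro r hr z hz
    rw [hQ2 z, hQ2max r]
    exact part2 m hm r hr z hz
end

section
/- Let m ≥ 2 be an integer and Q(z) = (1+z)^{2+2m}/(z(1−z)^{2m}). If |z| > (√(m+1)+√m)², then Re Q′(z) > 0. Consequently, for every θ ∈ ℝ, Q is injective on the half-plane {z ∈ ℂ : Re(z·e^{−iθ}) > (√(m+1)+√m)²}. -/
open Finset



-- Lemma A: negative binomial series
lemma hasSum_choose_geo (a : ℕ) :
    ∀ (x : ℂ), ‖x‖ < 1 →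
    (Summable fun k => ‖(((k + a).choose a : ℂ)) * x ^ k‖) ∧
    HasSum (fun k => (((k + a).choose a : ℂ)) * x ^ k) (((1 - x)⁻¹) ^ (a + 1)) := by
  induction a with
  | zero =>
    intro x hx
    constructor
    · simpa using summable_norm_geometric_of_norm_lt_one hx
    · simpa using hasSum_geometric_of_norm_lt_one hx
  | succ a ih =>
    intro x hx
    obtain ⟨hs, hh⟩ := ih x hx
    have hg : Summable fun k : ℕ => ‖x ^ k‖ := summable_norm_geometric_of_norm_lt_one hx
    have key : ∀ n : ℕ, (∑ k ∈ range (n + 1),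
        ((((k + a).choose a : ℂ)) * x ^ k) * x ^ (n - k)) = (((n + (a+1)).choose (a+1) : ℂ)) * x ^ n := by
      intro n
      have : ∀ k ∈ range (n+1), ((((k + a).choose a : ℂ)) * x ^ k) * x ^ (n - k)
          = (((k + a).choose a : ℂ)) * x ^ n := by
        intro k hk
        rw [mem_range] at hk
        rw [mul_assoc, ← pow_add]
        congr 2
        omega
      rw [Finset.sum_congr rfl this, ← Finset.sum_mul]
      congr 1
      norm_cast
      exact Nat.sum_range_add_choose n a
    have hsum := hasSum_sum_range_mul_of_summable_norm hs hg
    rw [hh.tsum_eq, (hasSum_geometric_of_norm_lt_one hx).tsum_eq] at hsum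
    constructor
    · have := summable_norm_sum_mul_range_of_summable_norm hs hg
      simpa only [key] using this
    · have : (((1:ℂ) - x)⁻¹) ^ (a + 1) * (1 - x)⁻¹ = ((1 - x)⁻¹) ^ (a + 1 + 1) := by
        ring
      rw [this] at hsum
      simpa only [key] using hsum


-- Lemma B
lemma hasSum_k_choose_geo (a : ℕ) (x : ℂ) (hx : ‖x‖ < 1) :
    (Summable fun k : ℕ => ‖(k : ℂ) * (((k + a).choose a : ℂ)) * x ^ k‖) ∧
    HasSum (fun k : ℕ => (k : ℂ) * (((k + a).choose a : ℂ)) * x ^ k)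
      (((a : ℂ) + 1) * x * ((1 - x)⁻¹) ^ (a + 2)) := by
  obtain ⟨hs, hh⟩ := hasSum_choose_geo (a + 1) x hx
  have hnat : ∀ k : ℕ, ((k+1) : ℕ) * ((k + 1 + a).choose a) = (a+1) * ((k + (a+1)).choose (a+1)) := by
    intro k
    have h := Nat.choose_succ_right_eq (k + 1 + a) a
    have h2 : k + 1 + a - a = k + 1 := by omega
    rw [h2] at h
    have h3 : k + (a+1) = k + 1 + a := by omega
    rw [h3, Nat.mul_comm (a+1), h, Nat.mul_comm]
  have hshift : ∀ k : ℕ, ((k:ℂ) + 1) * (((k + 1 + a).choose a : ℂ)) * x ^ (k+1)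
      = (((a:ℂ)+1) * x) * ((((k + (a+1)).choose (a+1) : ℂ)) * x ^ k) := by
    intro k
    have := hnat k
    have hc : ((k:ℂ) + 1) * (((k + 1 + a).choose a : ℂ)) = ((a:ℂ)+1) * (((k + (a+1)).choose (a+1) : ℂ)) := by
      push_cast
      exact_mod_cast congrArg (fun n : ℕ => (n : ℂ)) this
    rw [pow_succ]
    calc ((k:ℂ) + 1) * (((k + 1 + a).choose a : ℂ)) * (x ^ k * x)
        = (((k:ℂ) + 1) * (((k + 1 + a).choose a : ℂ))) * (x ^ k * x) := by ring
      _ = (((a:ℂ)+1) * (((k + (a+1)).choose (a+1) : ℂ))) * (x ^ k * x) := by rw [hc]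
      _ = (((a:ℂ)+1) * x) * ((((k + (a+1)).choose (a+1) : ℂ)) * x ^ k) := by ring
  constructor
  · rw [← summable_nat_add_iff 1]
    have : ∀ k : ℕ, ‖((k+1 : ℕ) : ℂ) * (((k + 1 + a).choose a : ℂ)) * x ^ (k+1)‖
        = ‖((a:ℂ)+1) * x‖ * ‖(((k + (a+1)).choose (a+1) : ℂ)) * x ^ k‖ := by
      intro k
      rw [show ((k+1 : ℕ) : ℂ) = (k:ℂ)+1 by push_cast; ring, hshift k, norm_mul]
    simpa only [this] using hs.mul_left ‖((a:ℂ)+1) * x‖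
  · have h2 := hh.mul_left (((a:ℂ)+1) * x)
    have h3 : HasSum (fun k => (((k+1:ℕ):ℂ)) * (((k + 1 + a).choose a : ℂ)) * x ^ (k+1))
        ((((a:ℂ)+1) * x) * ((1 - x)⁻¹) ^ (a + 2)) := by
      refine HasSum.congr_fun h2 ?_
      intro k
      rw [show ((k+1 : ℕ) : ℂ) = (k:ℂ)+1 by push_cast; ring, hshift k]
    have := (hasSum_nat_add_iff (f := fun k : ℕ => (k : ℂ) * (((k + a).choose a : ℂ)) * x ^ k) 1).mp h3
    simpa using this


-- T0 expansion
lemma T0_expand (N : ℕ) (x : ℂ) :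
    1 + (1+x)^N * ((N:ℂ)*x - 1)
      = ∑ n ∈ range (N+1), (((N:ℕ) * (N.choose n) : ℂ) - ((N.choose (n+1) : ℂ))) * x^(n+1) := by
  have hbin : (1+x)^N = ∑ n ∈ range (N+1), (N.choose n : ℂ) * x^n := by
    rw [add_comm 1 x, add_pow]
    apply Finset.sum_congr rfl
    intro n _
    ring
  have h1 : ∑ n ∈ range (N+1), ((N:ℕ) * (N.choose n) : ℂ) * x^(n+1)
      = (N:ℂ) * x * (1+x)^N := by
    rw [hbin, Finset.mul_sum]
    apply Finset.sum_congr rfl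
    intro n _
    push_cast
    ring
  have h2 : ∑ n ∈ range (N+1), ((N.choose (n+1) : ℂ)) * x^(n+1)
      = (1+x)^N - 1 := by
    have h3 : ∑ n ∈ range (N+2), ((N.choose n : ℂ)) * x^n
        = (∑ n ∈ range (N+1), ((N.choose (n+1) : ℂ)) * x^(n+1)) + 1 := by
      rw [Finset.sum_range_succ']
      simp
    have h4 : ∑ n ∈ range (N+2), ((N.choose n : ℂ)) * x^n = (1+x)^N := by
      rw [Finset.sum_range_succ, Nat.choose_succ_self]
      simp [hbin]
    rw [h4] at h3
    linear_combination -h3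
  rw [Finset.sum_congr rfl (fun n _ => sub_mul ((N:ℕ) * (N.choose n) : ℂ) _ (x^(n+1))),
    Finset.sum_sub_distrib, h1, h2]
  ring

lemma key_bound (m : ℕ) (hm : 2 ≤ m) (s : ℝ) (hs0 : 0 < s) (hs1 : s < 1)
    (hquad : s^2 - 2*(2*(m:ℝ)+1)*s + 1 = 0) (x : ℂ) (hxs : ‖x‖ < s) :
    ‖1 - (1+x)^(2*m+1) * (1 - 2*(2*(m:ℂ)+1)*x + x^2) * ((1-x)⁻¹)^(2*m+1)‖ < 1 := by
  set a : ℕ := 2*m - 1 with ha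
  have ha1 : a + 1 = 2*m := by omega
  have ha2 : a + 2 = 2*m + 1 := by omega
  set term : ℕ → ℂ → ℂ := fun k w =>
    (((k + a).choose a : ℂ)) * w^k *
      ((1+w)^(2*m+2) * k + (1+w)^(2*m+1) * ((((2*m+1 : ℕ)):ℂ)*w - 1)) with hterm
  -- the HasSum identity, for any w in the unit disk
  have hV : ∀ w : ℂ, ‖w‖ < 1 →
      HasSum (fun k => term k w)
        (-((1+w)^(2*m+1) * (1 - 2*(2*(m:ℂ)+1)*w + w^2) * ((1-w)⁻¹)^(2*m+1))) := by
    intro w hw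
    have hw1 : (1 : ℂ) - w ≠ 0 := by
      intro h
      have : (1:ℂ) = w := by linear_combination h
      rw [← this] at hw; simp at hw
    obtain ⟨_, hf⟩ := hasSum_choose_geo a w hw
    obtain ⟨_, hh⟩ := hasSum_k_choose_geo a w hw
    rw [ha1] at hf
    rw [ha2] at hh
    have hcomb := (hh.mul_left ((1+w)^(2*m+2))).add
      (hf.mul_left ((1+w)^(2*m+1) * ((((2*m+1 : ℕ)):ℂ)*w - 1)))
    have hfun : ∀ k : ℕ,
        ((1+w)^(2*m+2)) * ((k : ℂ) * (((k + a).choose a : ℂ)) * w ^ k)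
          + ((1+w)^(2*m+1) * ((((2*m+1 : ℕ)):ℂ)*w - 1)) * ((((k + a).choose a : ℂ)) * w ^ k)
        = term k w := by
      intro k
      rw [hterm]
      ring
    have hval : ((1+w)^(2*m+2)) * (((a : ℂ) + 1) * w * ((1 - w)⁻¹) ^ (2*m+1))
          + ((1+w)^(2*m+1) * ((((2*m+1 : ℕ)):ℂ)*w - 1)) * ((1 - w)⁻¹) ^ (2*m)
        = -((1+w)^(2*m+1) * (1 - 2*(2*(m:ℂ)+1)*w + w^2) * ((1-w)⁻¹)^(2*m+1)) := by
      have hacast : (a : ℂ) + 1 = 2*(m:ℂ) := by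
        have : ((a+1 : ℕ) : ℂ) = ((2*m : ℕ) : ℂ) := by rw [ha1]
        push_cast at this
        exact this
      rw [hacast]
      push_cast
      rw [show ((1 - w)⁻¹) ^ (2*m) = ((1 - w)⁻¹) ^ (2*m+1) * (1 - w) by rw [pow_succ, mul_assoc, inv_mul_cancel₀ hw1, mul_one]]
      ring
    rw [← hval]
    exact hcomb.congr_fun (fun k => (hfun k).symm)
  have hx1 : ‖x‖ < 1 := lt_trans hxs hs1
  have hVx := hV x hx1
  have hscplx : ‖((s:ℝ) : ℂ)‖ < 1 := by
    rw [Complex.norm_real, Real.norm_eq_abs, abs_of_pos hs0]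
    exact hs1
  have hVs0 : HasSum (fun k => term k (s:ℂ)) (-(term 0 (s:ℂ)) + term 0 (s:ℂ)) := by
    have h := hV (s:ℂ) hscplx
    have hzero : (1 - 2*(2*(m:ℂ)+1)*(s:ℂ) + (s:ℂ)^2) = 0 := by
      have : ((s^2 - 2*(2*(m:ℝ)+1)*s + 1 : ℝ) : ℂ) = 0 := by rw [hquad]; simp
      push_cast at this
      linear_combination this
    rw [hzero] at h
    simpa using h
  have hVs : HasSum (fun k => term k (s:ℂ)) 0 := by simpa using hVs0
  -- tails
  have htailx : HasSum (fun k => term (k+1) x) (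
      -((1+x)^(2*m+1) * (1 - 2*(2*(m:ℂ)+1)*x + x^2) * ((1-x)⁻¹)^(2*m+1)) - term 0 x) := by
    refine (hasSum_nat_add_iff (f := fun k => term k x) 1).mpr ?_
    simp only [Finset.sum_range_one, sub_add_cancel]
    exact hVx
  have htails : HasSum (fun k => term (k+1) (s:ℂ)) (- term 0 (s:ℂ)) := by
    refine (hasSum_nat_add_iff (f := fun k => term k (s:ℂ)) 1).mpr ?_
    simp only [Finset.sum_range_one, neg_add_cancel]
    exact hVs
  have hre : HasSum (fun k => (term (k+1) (s:ℂ)).re) (- term 0 (s:ℂ)).re :=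
    Complex.hasSum_re htails
  -- factored form
  have hfact : ∀ (k : ℕ) (w : ℂ), term (k+1) w =
      ((((k+1) + a).choose a : ℂ)) * (w^(k+1) * ((1+w)^(2*m+1) *
        (((k:ℕ) : ℂ) + (((2*m+k+2 : ℕ)) : ℂ) * w))) := by
    intro k w
    rw [hterm]
    push_cast
    ring
  -- termwise bound
  have hb : ∀ k : ℕ, ‖term (k+1) x‖ ≤ (term (k+1) (s:ℂ)).re := by
    intro k
    have hres : (term (k+1) (s:ℂ)).re =
        (((k+1) + a).choose a : ℝ) * (s^(k+1) * ((1+s)^(2*m+1) *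
          ((k:ℝ) + (2*(m:ℝ)+(k:ℝ)+2) * s))) := by
      rw [hfact k (s:ℂ)]
      have : ((((k+1) + a).choose a : ℂ)) * (((s:ℂ))^(k+1) * ((1+(s:ℂ))^(2*m+1) *
          (((k:ℕ) : ℂ) + (((2*m+k+2 : ℕ)) : ℂ) * (s:ℂ))))
          = (((((k+1) + a).choose a : ℝ) * (s^(k+1) * ((1+s)^(2*m+1) *
          ((k:ℝ) + (2*(m:ℝ)+(k:ℝ)+2) * s))) : ℝ) : ℂ) := by
        push_cast
        ring
      rw [this, Complex.ofReal_re]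
    have hlast : ‖((k:ℕ) : ℂ) + (((2*m+k+2 : ℕ)) : ℂ) * x‖ ≤ (k:ℝ) + (2*(m:ℝ)+(k:ℝ)+2) * s := by
      refine le_trans (norm_add_le _ _) ?_
      rw [norm_mul]
      simp only [Complex.norm_natCast]
      push_cast
      have h0 : (0:ℝ) ≤ 2*(m:ℝ)+(k:ℝ)+2 := by positivity
      nlinarith [norm_nonneg x]
    have h1x : ‖(1:ℂ)+x‖ ≤ 1 + s := by
      refine le_trans (norm_add_le _ _) ?_
      simp only [norm_one]
      linarith
    rw [hfact k x, hres]
    calc ‖((((k+1) + a).choose a : ℂ)) * (x^(k+1) * ((1+x)^(2*m+1) *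
            (((k:ℕ) : ℂ) + (((2*m+k+2 : ℕ)) : ℂ) * x)))‖
        = (((k+1) + a).choose a : ℝ) * (‖x‖^(k+1) * (‖(1:ℂ)+x‖^(2*m+1) *
            ‖((k:ℕ) : ℂ) + (((2*m+k+2 : ℕ)) : ℂ) * x‖)) := by
          simp [norm_mul, norm_pow]
      _ ≤ (((k+1) + a).choose a : ℝ) * (s^(k+1) * ((1+s)^(2*m+1) *
            ((k:ℝ) + (2*(m:ℝ)+(k:ℝ)+2) * s))) := by
          gcongr <;> first
            | exact Nat.cast_nonneg _
            | exact norm_nonneg x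
            | exact le_of_lt hxs
            | exact le_trans (norm_nonneg _) h1x
            | exact h1x
            | exact hlast
  have hsumnx : Summable (fun k => ‖term (k+1) x‖) :=
    Summable.of_nonneg_of_le (fun k => norm_nonneg _) hb hre.summable
  have htail_norm : ‖-((1+x)^(2*m+1) * (1 - 2*(2*(m:ℂ)+1)*x + x^2) * ((1-x)⁻¹)^(2*m+1)) - term 0 x‖
      ≤ (- term 0 (s:ℂ)).re := by
    rw [← htailx.tsum_eq, ← hre.tsum_eq]
    exact le_trans (norm_tsum_le_tsum_norm hsumnx) (Summable.tsum_le_tsum hb hsumnx hre.summable)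
  -- head: T0 expansion and strict bound
  have hterm0 : ∀ w : ℂ, term 0 w = (1+w)^(2*m+1) * ((((2*m+1 : ℕ)):ℂ)*w - 1) := by
    intro w
    rw [hterm]
    simp [Nat.choose_self]
  have hd : ∀ n : ℕ, ((2*m+1 : ℕ) : ℝ) * (((2*m+1).choose n : ℕ) : ℝ)
      - (((2*m+1).choose (n+1) : ℕ) : ℝ) ≥ 0 := by
    intro n
    have hnat : (2*m+1).choose (n+1) ≤ (2*m+1) * ((2*m+1).choose n) := by
      have h := Nat.choose_succ_right_eq (2*m+1) n
      calc (2*m+1).choose (n+1) ≤ (2*m+1).choose (n+1) * (n+1) := by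
            exact Nat.le_mul_of_pos_right _ (by omega)
        _ = (2*m+1).choose n * (2*m+1 - n) := h
        _ ≤ (2*m+1).choose n * (2*m+1) := Nat.mul_le_mul_left _ (by omega)
        _ = (2*m+1) * ((2*m+1).choose n) := Nat.mul_comm _ _
    have := (Nat.cast_le (α := ℝ)).mpr hnat
    push_cast at this ⊢
    linarith
  have hheadx : ‖(1 : ℂ) + term 0 x‖ ≤ ∑ n ∈ range (2*m+2),
      (((2*m+1 : ℕ) : ℝ) * (((2*m+1).choose n : ℕ) : ℝ) - (((2*m+1).choose (n+1) : ℕ) : ℝ)) * ‖x‖^(n+1) := by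
    rw [hterm0, T0_expand (2*m+1) x]
    refine le_trans (norm_sum_le _ _) ?_
    apply Finset.sum_le_sum
    intro n _
    rw [norm_mul, norm_pow]
    have : ‖((2*m+1 : ℕ) : ℂ) * (((2*m+1).choose n : ℕ) : ℂ) - (((2*m+1).choose (n+1) : ℕ) : ℂ)‖
        = ((2*m+1 : ℕ) : ℝ) * (((2*m+1).choose n : ℕ) : ℝ) - (((2*m+1).choose (n+1) : ℕ) : ℝ) := by
      have hcast : ((2*m+1 : ℕ) : ℂ) * (((2*m+1).choose n : ℕ) : ℂ) - (((2*m+1).choose (n+1) : ℕ) : ℂ)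
          = (((((2*m+1 : ℕ)) : ℝ) * (((2*m+1).choose n : ℕ) : ℝ) - (((2*m+1).choose (n+1) : ℕ) : ℝ) : ℝ) : ℂ) := by
        push_cast
        ring
      rw [hcast, Complex.norm_real, Real.norm_eq_abs, abs_of_nonneg (hd n)]
    rw [this]
  have hstrict : ∑ n ∈ range (2*m+2),
      (((2*m+1 : ℕ) : ℝ) * (((2*m+1).choose n : ℕ) : ℝ) - (((2*m+1).choose (n+1) : ℕ) : ℝ)) * ‖x‖^(n+1)
      < ∑ n ∈ range (2*m+2),
      (((2*m+1 : ℕ) : ℝ) * (((2*m+1).choose n : ℕ) : ℝ) - (((2*m+1).choose (n+1) : ℕ) : ℝ)) * s^(n+1) := by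
    apply Finset.sum_lt_sum
    · intro i _
      have h1 : ‖x‖^(i+1) ≤ s^(i+1) := by
        apply pow_le_pow_left₀ (norm_nonneg x) (le_of_lt hxs)
      exact mul_le_mul_of_nonneg_left h1 (hd i)
    · refine ⟨1, by simp, ?_⟩
      have hch2 : (2*m+1).choose 2 = (2*m+1)*m := by
        rw [Nat.choose_two_right]
        have h : (2*m+1) * (2*m+1-1) = ((2*m+1)*m)*2 := by
          have : 2*m+1-1 = 2*m := by omega
          rw [this]; ring
        rw [h, Nat.mul_div_cancel _ (by omega)]
      have hc1 : (2*m+1).choose 1 = 2*m+1 := Nat.choose_one_right _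
      have hdpos : (0:ℝ) < ((2*m+1 : ℕ) : ℝ) * (((2*m+1).choose 1 : ℕ) : ℝ) - (((2*m+1).choose 2 : ℕ) : ℝ) := by
        rw [hch2, hc1]
        push_cast
        nlinarith [hm]
      have hpow : ‖x‖^(1+1) < s^(1+1) := by
        apply pow_lt_pow_left₀ hxs (norm_nonneg x)
        omega
      exact mul_lt_mul_of_pos_left hpow hdpos
  have hheads : ((1 : ℂ) + term 0 (s:ℂ)).re = ∑ n ∈ range (2*m+2),
      (((2*m+1 : ℕ) : ℝ) * (((2*m+1).choose n : ℕ) : ℝ) - (((2*m+1).choose (n+1) : ℕ) : ℝ)) * s^(n+1) := by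
    rw [hterm0, T0_expand (2*m+1) (s:ℂ), Complex.re_sum]
    apply Finset.sum_congr rfl
    intro n _
    have hcast : ((((2*m+1 : ℕ)) : ℂ) * ((((2*m+1).choose n : ℕ)) : ℂ) - ((((2*m+1).choose (n+1) : ℕ)) : ℂ)) * ((s:ℂ))^(n+1)
        = ((((((2*m+1 : ℕ)) : ℝ) * ((((2*m+1).choose n : ℕ)) : ℝ) - ((((2*m+1).choose (n+1) : ℕ)) : ℝ)) * s^(n+1) : ℝ) : ℂ) := by
      push_cast
      ring
    rw [hcast, Complex.ofReal_re]
  -- final assembly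
  have hsplit : (1 : ℂ) - (1+x)^(2*m+1) * (1 - 2*(2*(m:ℂ)+1)*x + x^2) * ((1-x)⁻¹)^(2*m+1)
      = ((1 : ℂ) + term 0 x) +
        (-((1+x)^(2*m+1) * (1 - 2*(2*(m:ℂ)+1)*x + x^2) * ((1-x)⁻¹)^(2*m+1)) - term 0 x) := by
    ring
  rw [hsplit]
  calc ‖((1 : ℂ) + term 0 x) +
        (-((1+x)^(2*m+1) * (1 - 2*(2*(m:ℂ)+1)*x + x^2) * ((1-x)⁻¹)^(2*m+1)) - term 0 x)‖
      ≤ ‖(1 : ℂ) + term 0 x‖ +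
        ‖-((1+x)^(2*m+1) * (1 - 2*(2*(m:ℂ)+1)*x + x^2) * ((1-x)⁻¹)^(2*m+1)) - term 0 x‖ :=
        norm_add_le _ _
    _ < ((1 : ℂ) + term 0 (s:ℂ)).re + (- term 0 (s:ℂ)).re := by
        rw [hheads]
        linarith [hheadx, hstrict, htail_norm]
    _ = 1 := by
      simp [Complex.add_re, Complex.neg_re, Complex.one_re]


lemma hasDerivAt_aux (n : ℕ) (z : ℂ) (hz0 : z ≠ 0) (hz1 : z ≠ 1) :
    HasDerivAt (fun w : ℂ => (1+w)^(n+3) / (w * (1-w)^(n+1)))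
      ((1+z)^(n+2) * (2*((n:ℂ)+2)*z - z^2 - 1) / (z^2 * (1-z)^(n+2))) z := by
  have h1z : (1:ℂ) - z ≠ 0 := sub_ne_zero.mpr (Ne.symm hz1)
  have hnum : HasDerivAt (fun w : ℂ => (1+w)^(n+3)) (((n+3 : ℕ):ℂ) * (1+z)^(n+2)) z := by
    have h := ((hasDerivAt_id z).const_add 1).fun_pow (n+3)
    simpa using h
  have hin : HasDerivAt (fun w : ℂ => (1-w)^(n+1)) (((n+1 : ℕ):ℂ) * (1-z)^n * (-1)) z := by
    have h := ((hasDerivAt_const z (1:ℂ)).sub (hasDerivAt_id z)).fun_pow (n+1)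
    simpa using h
  have hden : HasDerivAt (fun w : ℂ => w * (1-w)^(n+1))
      (1 * (1-z)^(n+1) + z * (((n+1 : ℕ):ℂ) * (1-z)^n * (-1))) z :=
    (hasDerivAt_id z).mul hin
  have hne : z * (1-z)^(n+1) ≠ 0 := mul_ne_zero hz0 (pow_ne_zero _ h1z)
  have h := hnum.div hden hne
  refine HasDerivAt.congr_deriv h ?_
  field_simp
  push_cast
  ring

lemma deriv_eq_aux (m : ℕ) (z : ℂ) (hz0 : z ≠ 0) (hz1 : z ≠ 1) :
    (1+z)^(2*m+1) * (2*(2*(m:ℂ)+1)*z - z^2 - 1) / (z^2 * (1-z)^(2*m+1))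
      = (1+z⁻¹)^(2*m+1) * (1 - 2*(2*(m:ℂ)+1)*z⁻¹ + (z⁻¹)^2) * ((1-z⁻¹)⁻¹)^(2*m+1) := by
  have h1z : (1:ℂ) - z ≠ 0 := sub_ne_zero.mpr (Ne.symm hz1)
  have hz1' : z - 1 ≠ 0 := sub_ne_zero.mpr hz1
  have h1x : (1:ℂ) - z⁻¹ = (z-1)/z := by field_simp
  have h1px : (1:ℂ) + z⁻¹ = (z+1)/z := by field_simp
  have hneg : (z - 1)^(2*m+1) = -((1-z)^(2*m+1)) := by
    rw [show (z - 1 : ℂ) = -(1-z) by ring, Odd.neg_pow ⟨m, by ring⟩]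
  have e1 : ((1 - z⁻¹)⁻¹)^(2*m+1) = z^(2*m+1) / (-((1-z)^(2*m+1))) := by
    rw [h1x, inv_div, div_pow, hneg]
  have e2 : (1+z⁻¹)^(2*m+1) = (z+1)^(2*m+1) / z^(2*m+1) := by rw [h1px, div_pow]
  have e3 : (1 - 2*(2*(m:ℂ)+1)*z⁻¹ + (z⁻¹)^2) = (z^2 - 2*(2*(m:ℂ)+1)*z + 1)/z^2 := by
    field_simp
  rw [e1, e2, e3]
  rw [div_mul_div_comm, div_mul_div_comm]
  rw [div_eq_div_iff (mul_ne_zero (pow_ne_zero 2 hz0) (pow_ne_zero _ h1z)) (by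
    apply mul_ne_zero (mul_ne_zero (pow_ne_zero _ hz0) (pow_ne_zero 2 hz0)) 
    simpa using pow_ne_zero (2*m+1) h1z)]
  ring

lemma sqrt_facts (m : ℕ) (hm : 2 ≤ m) :
    0 < (Real.sqrt ((m:ℝ)+1) - Real.sqrt (m:ℝ))^2 ∧
    (Real.sqrt ((m:ℝ)+1) - Real.sqrt (m:ℝ))^2 * (Real.sqrt ((m:ℝ)+1) + Real.sqrt (m:ℝ))^2 = 1 ∧
    (Real.sqrt ((m:ℝ)+1) - Real.sqrt (m:ℝ))^2 + (Real.sqrt ((m:ℝ)+1) + Real.sqrt (m:ℝ))^2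
      = 2*(2*(m:ℝ)+1) ∧
    1 < (Real.sqrt ((m:ℝ)+1) + Real.sqrt (m:ℝ))^2 := by
  have hm0 : (0:ℝ) ≤ (m:ℝ) := Nat.cast_nonneg m
  have hm1 : (0:ℝ) ≤ (m:ℝ) + 1 := by linarith
  have ha : Real.sqrt ((m:ℝ)+1) ^ 2 = (m:ℝ)+1 := Real.sq_sqrt hm1
  have hb : Real.sqrt (m:ℝ) ^ 2 = (m:ℝ) := Real.sq_sqrt hm0
  have hlt : Real.sqrt (m:ℝ) < Real.sqrt ((m:ℝ)+1) := by
    apply Real.sqrt_lt_sqrt hm0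
    linarith
  have ha1 : 1 ≤ Real.sqrt ((m:ℝ)+1) := by
    have h := Real.sqrt_le_sqrt (show (1:ℝ) ≤ (m:ℝ)+1 by linarith)
    simpa using h
  have hb0 : 0 < Real.sqrt (m:ℝ) := Real.sqrt_pos.mpr (by
    have : (2:ℝ) ≤ (m:ℝ) := by exact_mod_cast hm
    linarith)
  refine ⟨pow_pos (by linarith) 2, ?_, ?_, ?_⟩
  · have : (Real.sqrt ((m:ℝ)+1) - Real.sqrt (m:ℝ)) * (Real.sqrt ((m:ℝ)+1) + Real.sqrt (m:ℝ))
        = 1 := by nlinarith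
    nlinarith
  · nlinarith
  · nlinarith

/-- `Re Q′(z) > 0` for `|z| > (√(m+1)+√m)²`, hence `Q` is injective on every
half-plane `{Re(z e^{-iθ}) > (√(m+1)+√m)²}`. -/
theorem stmt_4 (m : ℕ) (hm : 2 ≤ m)
    (Q : ℂ → ℂ)
    (hQ : ∀ z : ℂ, Q z = (1 + z) ^ (2 + 2 * m) / (z * (1 - z) ^ (2 * m))) :
    (∀ z : ℂ, (Real.sqrt ((m : ℝ) + 1) + Real.sqrt (m : ℝ)) ^ 2 < ‖z‖ →
      0 < (deriv Q z).re) ∧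
    (∀ θ : ℝ, Set.InjOn Q
      {z : ℂ | (Real.sqrt ((m : ℝ) + 1) + Real.sqrt (m : ℝ)) ^ 2 <
        (z * Complex.exp (-(θ : ℂ) * Complex.I)).re}) := by
  obtain ⟨hs0, hsR, hsum, hR1⟩ := sqrt_facts m hm
  set R := (Real.sqrt ((m:ℝ) + 1) + Real.sqrt (m:ℝ)) ^ 2 with hRdef
  set s := (Real.sqrt ((m:ℝ) + 1) - Real.sqrt (m:ℝ)) ^ 2 with hsdef
  have hs1 : s < 1 := by nlinarith
  have hquad : s^2 - 2*(2*(m:ℝ)+1)*s + 1 = 0 := by linear_combination s*hsum - hsR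
  -- the derivative of Q
  have hQhasD : ∀ z : ℂ, z ≠ 0 → z ≠ 1 → HasDerivAt Q
      ((1+z)^(2*m+1) * (2*(2*(m:ℂ)+1)*z - z^2 - 1) / (z^2 * (1-z)^(2*m+1))) z := by
    intro z hz0 hz1
    have hQfun : Q = fun w : ℂ => (1+w)^((2*m-1)+3) / (w * (1-w)^((2*m-1)+1)) := by
      funext w
      rw [show (2*m-1)+3 = 2+2*m from by omega, show (2*m-1)+1 = 2*m from by omega, hQ w]
    have hD := hasDerivAt_aux (2*m-1) z hz0 hz1
    rw [← hQfun] at hD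
    have ecast : ((2*m-1 : ℕ):ℂ) + 2 = 2*(m:ℂ)+1 := by
      push_cast [Nat.cast_sub (show 1 ≤ 2*m by omega)]
      ring
    rw [show (2*m-1)+2 = 2*m+1 from by omega, ecast] at hD
    exact hD
  have part1 : ∀ z : ℂ, R < ‖z‖ → 0 < (deriv Q z).re := by
    intro z hz
    have habs1 : (1:ℝ) < ‖z‖ := lt_trans hR1 hz
    have hz0 : z ≠ 0 := by
      intro h; rw [h] at habs1; simp at habs1; linarith
    have hz1 : z ≠ 1 := by
      intro h; rw [h] at habs1; simp at habs1
    have hDeriv : deriv Q z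
        = (1+z)^(2*m+1) * (2*(2*(m:ℂ)+1)*z - z^2 - 1) / (z^2 * (1-z)^(2*m+1)) :=
      (hQhasD z hz0 hz1).deriv
    rw [hDeriv, deriv_eq_aux m z hz0 hz1]
    have h0 : (0:ℝ) < ‖z‖ := lt_trans one_pos habs1
    have hxnorm : ‖z⁻¹‖ < s := by
      rw [norm_inv, inv_eq_one_div, div_lt_iff₀ h0]
      nlinarith
    have hkb := key_bound m hm s hs0 hs1 hquad z⁻¹ hxnorm
    set W := (1+z⁻¹)^(2*m+1) * (1 - 2*(2*(m:ℂ)+1)*z⁻¹ + (z⁻¹)^2) * ((1-z⁻¹)⁻¹)^(2*m+1) with hW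
    have hre : (1 - W).re ≤ ‖1 - W‖ := Complex.re_le_norm _
    have hsub : (1 - W).re = 1 - W.re := by simp [Complex.sub_re]
    rw [hsub] at hre
    linarith
  refine ⟨part1, ?_⟩
  intro θ z1 hz1 z2 hz2 hQeq
  by_contra hne
  have hw : z2 - z1 ≠ 0 := sub_ne_zero.mpr (Ne.symm hne)
  set E := Complex.exp (-(θ:ℂ) * Complex.I) with hE
  have hz1' : R < (z1 * E).re := hz1
  have hz2' : R < (z2 * E).re := hz2
  set γ : ℝ → ℂ := fun t => z1 + (t:ℂ) * (z2 - z1) with hγ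
  have hmem : ∀ t ∈ Set.Icc (0:ℝ) 1, R < ((γ t) * E).re := by
    intro t ht
    obtain ⟨ht0, ht1⟩ := ht
    have hcomb : (γ t) * E = ((1-t : ℝ):ℂ) * (z1 * E) + ((t:ℝ):ℂ) * (z2 * E) := by
      rw [hγ]
      push_cast
      ring
    rw [hcomb]
    rw [Complex.add_re, Complex.re_ofReal_mul, Complex.re_ofReal_mul]
    nlinarith [mul_nonneg (by linarith : (0:ℝ) ≤ 1 - t) (le_of_lt (sub_pos.mpr hz1')),
      mul_nonneg ht0 (le_of_lt (sub_pos.mpr hz2'))]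
  have habsγ : ∀ t ∈ Set.Icc (0:ℝ) 1, R < ‖γ t‖ := by
    intro t ht
    have h1 := hmem t ht
    have h2 : ((γ t) * E).re ≤ ‖(γ t) * E‖ := Complex.re_le_norm _
    have h3 : ‖(γ t) * E‖ = ‖γ t‖ := by
      rw [norm_mul]
      have : ‖E‖ = 1 := by
        rw [hE, Complex.norm_exp]
        simp
      rw [this, mul_one]
    linarith
  have hne01 : ∀ t ∈ Set.Icc (0:ℝ) 1, γ t ≠ 0 ∧ γ t ≠ 1 := by
    intro t ht
    have h := habsγ t ht
    have h1 : (1:ℝ) < ‖γ t‖ := lt_trans hR1 h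
    constructor
    · intro hc; rw [hc] at h1; simp at h1; linarith
    · intro hc; rw [hc] at h1; simp at h1
  set φ : ℝ → ℝ := fun t => ((Q (γ t)) / (z2 - z1)).re with hφ
  have hφD : ∀ t ∈ Set.Icc (0:ℝ) 1, HasDerivAt φ ((deriv Q (γ t)).re) t := by
    intro t ht
    obtain ⟨hg0, hg1⟩ := hne01 t ht
    have hγD : HasDerivAt (fun u : ℝ => z1 + (u:ℂ) * (z2 - z1)) (z2 - z1) t := by
      have h1 : HasDerivAt (fun u : ℝ => (u:ℂ)) 1 t := Complex.ofRealCLM.hasDerivAt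
      have h2 := (h1.mul_const (z2 - z1)).const_add z1
      simpa using h2
    have hQd := hQhasD (γ t) hg0 hg1
    have hcomp : HasDerivAt (fun u : ℝ => Q (z1 + (u:ℂ) * (z2 - z1)))
        ((z2 - z1) * ((1+(γ t))^(2*m+1) * (2*(2*(m:ℂ)+1)*(γ t) - (γ t)^2 - 1)
          / ((γ t)^2 * (1-(γ t))^(2*m+1)))) t := by
      have h := (hQd.hasFDerivAt.restrictScalars ℝ).comp_hasDerivAt t hγD
      simpa [hγ, Function.comp_def] using h
    have hdiv := hcomp.div_const (z2 - z1)
    have hval : (z2 - z1) * ((1+(γ t))^(2*m+1) * (2*(2*(m:ℂ)+1)*(γ t) - (γ t)^2 - 1)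
          / ((γ t)^2 * (1-(γ t))^(2*m+1))) / (z2 - z1)
        = deriv Q (γ t) := by
      rw [mul_div_cancel_left₀ _ hw, hQd.deriv]
    rw [hval] at hdiv
    have hre := Complex.reCLM.hasFDerivAt.comp_hasDerivAt t hdiv
    simpa [hφ, hγ, Function.comp_def] using hre
  have hcont : ContinuousOn φ (Set.Icc (0:ℝ) 1) :=
    fun t ht => ((hφD t ht).continuousAt).continuousWithinAt
  have hmono : StrictMonoOn φ (Set.Icc (0:ℝ) 1) := by
    apply strictMonoOn_of_deriv_pos (convex_Icc 0 1) hcont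
    intro t ht
    rw [interior_Icc] at ht
    have ht' : t ∈ Set.Icc (0:ℝ) 1 := Set.mem_Icc_of_Ioo ht
    rw [(hφD t ht').deriv]
    exact part1 (γ t) (habsγ t ht')
  have h01 : φ 0 < φ 1 := by
    apply hmono (Set.mem_Icc.mpr ⟨le_refl 0, zero_le_one⟩)
      (Set.mem_Icc.mpr ⟨zero_le_one, le_refl 1⟩) zero_lt_one
  have hγ0 : γ 0 = z1 := by simp [hγ]
  have hγ1 : γ 1 = z2 := by simp [hγ]
  have : φ 0 = φ 1 := by
    rw [hφ]
    simp only [hγ0, hγ1, hQeq]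
  linarith
end

section
/- Fix the real constants e₁ = 0.84, e₀ = −0.18, e₋₁ = 0.6, and for r ≥ 1 set a_E(r) = e₁r + e₋₁/r, b_E(r) = e₁r − e₋₁/r, E_r = {x+iy ∈ ℂ : ((x−e₀)/a_E(r))² + (y/b_E(r))² ≤ 1}. Let m ≥ 2 be an integer, α = mπ/(2(m+1)), and let ε₃, ε₄ be real numbers with 2/3 ≤ ε₃ < 1 and 1 < ε₄ < 1/sin α. Then E_{1.4} is contained in the union D̄(cot(α)·i, 1/sin α) ∪ D̄(−cot(α)·i, 1/sin α) ∪ D̄(1, ε₃) ∪ D̄(−1, ε₄). Consequently, the complement of these four closed disks in ℂ is contained in ℂ∖E_{1.4}. -/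
set_option maxHeartbeats 1000000

lemma mem_cb_aux {z c : ℂ} {r : ℝ} (hr : 0 ≤ r)
    (h : (z.re - c.re) ^ 2 + (z.im - c.im) ^ 2 ≤ r ^ 2) :
    z ∈ Metric.closedBall c r := by
  rw [Metric.mem_closedBall, Complex.dist_eq, Complex.norm_def, ← Real.sqrt_sq hr]
  apply Real.sqrt_le_sqrt
  have hn : Complex.normSq (z - c) = (z.re - c.re) ^ 2 + (z.im - c.im) ^ 2 := by
    simp [Complex.normSq_apply, Complex.sub_re, Complex.sub_im]; ring
  rw [hn]; exact h

/-- the ellipse `E_{1.4}` is covered by the four closed disks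
`D̄(±i cot α, 1/sin α)`, `D̄(1, ε₃)`, `D̄(-1, ε₄)`; consequently the complement of the four
disks is contained in the complement of `E_{1.4}`. -/
theorem stmt_9 (m : ℕ) (hm : 2 ≤ m)
    (α : ℝ) (hα : α = (m : ℝ) * Real.pi / (2 * ((m : ℝ) + 1)))
    (ε3 ε4 : ℝ) (h3a : 2 / 3 ≤ ε3) (h3b : ε3 < 1) (h4a : 1 < ε4) (h4b : ε4 < 1 / Real.sin α)
    (aE bE : ℝ → ℝ)
    (haE : ∀ r : ℝ, aE r = 0.84 * r + 0.6 / r)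
    (hbE : ∀ r : ℝ, bE r = 0.84 * r - 0.6 / r)
    (E : ℝ → Set ℂ)
    (hE : ∀ r : ℝ, E r =
      {z : ℂ | ((z.re - (-0.18)) / aE r) ^ 2 + (z.im / bE r) ^ 2 ≤ 1}) :
    E 1.4 ⊆
      Metric.closedBall ((Real.cot α : ℂ) * Complex.I) (1 / Real.sin α) ∪
      Metric.closedBall (-((Real.cot α : ℂ) * Complex.I)) (1 / Real.sin α) ∪
      Metric.closedBall (1 : ℂ) ε3 ∪ Metric.closedBall (-1 : ℂ) ε4 ∧
    (Metric.closedBall ((Real.cot α : ℂ) * Complex.I) (1 / Real.sin α) ∪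
      Metric.closedBall (-((Real.cot α : ℂ) * Complex.I)) (1 / Real.sin α) ∪
      Metric.closedBall (1 : ℂ) ε3 ∪ Metric.closedBall (-1 : ℂ) ε4)ᶜ ⊆ (E 1.4)ᶜ := by
  have hπ := Real.pi_pos
  have hm1 : (2:ℝ) ≤ (m:ℝ) := by exact_mod_cast hm
  have hα1 : 0 < α := by
    rw [hα]; positivity
  have hα2 : α < Real.pi / 2 := by
    rw [hα, div_lt_div_iff₀ (by linarith) (by norm_num)]
    nlinarith
  have hs : 0 < Real.sin α :=
    Real.sin_pos_of_pos_of_lt_pi hα1 (by linarith)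
  have hc : 0 ≤ Real.cos α :=
    Real.cos_nonneg_of_mem_Icc ⟨by linarith, le_of_lt hα2⟩
  have hcot : Real.cot α = Real.cos α / Real.sin α := Real.cot_eq_cos_div_sin α
  have hcotpos : 0 ≤ Real.cot α := by rw [hcot]; positivity
  have hrpos : 0 ≤ 1 / Real.sin α := by positivity
  have hid : (1 / Real.sin α) ^ 2 = Real.cot α ^ 2 + 1 := by
    have hpy := Real.sin_sq_add_cos_sq α
    rw [hcot]
    field_simp
    try linarith
  have hmain : E 1.4 ⊆
      Metric.closedBall ((Real.cot α : ℂ) * Complex.I) (1 / Real.sin α) ∪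
      Metric.closedBall (-((Real.cot α : ℂ) * Complex.I)) (1 / Real.sin α) ∪
      Metric.closedBall (1 : ℂ) ε3 ∪ Metric.closedBall (-1 : ℂ) ε4 := by
    intro z hz
    rw [hE, haE, hbE, Set.mem_setOf_eq] at hz
    set x := z.re with hx
    set y := z.im with hy
    have hA : (0.84 * 1.4 + 0.6 / 1.4 : ℝ) = 1404 / 875 := by norm_num
    have hB : (0.84 * 1.4 - 0.6 / 1.4 : ℝ) = 654 / 875 := by norm_num
    rw [hA, hB] at hz
    have raw : (654:ℝ)^2 * (x + 0.18)^2 + 1404^2 * y^2 ≤ (1404 * 654 / 875)^2 := by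
      have h1 : ((x - (-0.18)) / (1404/875))^2 = (x + 0.18)^2 * (875/1404)^2 := by ring
      have h2 : (y / (654/875))^2 = y^2 * (875/654)^2 := by ring
      rw [h1, h2] at hz
      nlinarith [hz]
    rcases le_or_gt x (-(2/5 : ℝ)) with hx1 | hx1
    · -- left: disk around -1 of radius ε₄
      right
      have hxl : (-1.79 : ℝ) ≤ x := by nlinarith [raw, sq_nonneg y]
      have hq : (x + 1)^2 + y^2 ≤ 1 := by
        nlinarith [raw, mul_nonneg (by linarith : (0:ℝ) ≤ x + 1.79) (by linarith : (0:ℝ) ≤ -(x + 2/5))]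
      refine mem_cb_aux (by linarith) ?_
      have h4 : (1:ℝ) ≤ ε4 ^ 2 := by nlinarith
      simpa using le_trans hq h4
    · rcases le_or_gt (39/50 : ℝ) x with hx2 | hx2
      · -- right: disk around 1 of radius ε₃
        left; right
        have hxr : x ≤ (1.45 : ℝ) := by nlinarith [raw, sq_nonneg y]
        have hq : (x - 1)^2 + y^2 ≤ (2/3)^2 := by
          nlinarith [raw, mul_nonneg (by linarith : (0:ℝ) ≤ x - 39/50) (by linarith : (0:ℝ) ≤ 1.45 - x)]
        refine mem_cb_aux (by linarith) ?_
        have h3 : ((2:ℝ)/3)^2 ≤ ε3 ^ 2 := by nlinarith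
        simpa using le_trans hq h3
      · -- middle: unit disk, covered by the two cot disks
        have hq : x^2 + y^2 ≤ 1 := by
          nlinarith [raw, mul_nonneg (by linarith : (0:ℝ) ≤ x + 2/5) (by linarith : (0:ℝ) ≤ 39/50 - x)]
        rcases le_or_gt 0 y with hy1 | hy1
        · left; left; left
          refine mem_cb_aux hrpos ?_
          have hre : ((Real.cot α : ℂ) * Complex.I).re = 0 := by simp [-Complex.ofReal_cot]
          have him : ((Real.cot α : ℂ) * Complex.I).im = Real.cot α := by simp [-Complex.ofReal_cot]
          rw [hre, him, hid]
          nlinarith [mul_nonneg hcotpos hy1]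
        · left; left; right
          refine mem_cb_aux hrpos ?_
          have hre : (-((Real.cot α : ℂ) * Complex.I)).re = 0 := by simp [-Complex.ofReal_cot]
          have him : (-((Real.cot α : ℂ) * Complex.I)).im = -Real.cot α := by simp [-Complex.ofReal_cot]
          rw [hre, him, hid]
          nlinarith [mul_nonneg hcotpos (by linarith : (0:ℝ) ≤ -y)]
  exact ⟨hmain, Set.compl_subset_compl.mpr hmain⟩
end

section
/- Let β ∈ (0, π/2) and let ψ₁(z) = −4z/(1+z)² (equivalently ψ₁ = ψ_{1,2}∘ψ_{1,1} with ψ_{1,1}(z) = (z−1)/(z+1) and ψ_{1,2}(w) = w² − 1). Then: (i) ψ_{1,1} maps the set D(cot(β)·i, 1/sin β) ∖ D̄(0,1) bijectively onto the open sector {w ∈ ℂ : w ≠ 0, β < arg w < π/2}; (ii) ψ₁ maps D(cot(β)·i, 1/sin β) ∖ D̄(0,1) bijectively onto {z ∈ ℂ : z ≠ −1, 2β < arg(z+1) < π}; and symmetrically ψ₁ maps D(−cot(β)·i, 1/sin β) ∖ D̄(0,1) onto {z ∈ ℂ : z ≠ −1, −π < arg(z+1) < −2β}. -/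
open Complex Set Metric

private lemma sector_char {β : ℝ} (hβ1 : 0 < β) (hβ2 : β < Real.pi / 2) (w : ℂ) :
    (w ≠ 0 ∧ β < w.arg ∧ w.arg < Real.pi / 2) ↔
      (0 < w.re ∧ Real.sin β * w.re < Real.cos β * w.im) := by
  have hcos : 0 < Real.cos β := Real.cos_pos_of_mem_Ioo ⟨by linarith, hβ2⟩
  have hβmem : β ∈ Set.Ioo (-(Real.pi / 2)) (Real.pi / 2) := ⟨by linarith, hβ2⟩
  constructor
  · rintro ⟨h0, h1, h2⟩
    have hre : 0 < w.re := by
      rcases Complex.abs_arg_lt_pi_div_two_iff.mp (by rw [abs_lt]; exact ⟨by linarith, h2⟩)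
        with h | h
      · exact h
      · exact absurd h h0
    refine ⟨hre, ?_⟩
    have hargmem : w.arg ∈ Set.Ioo (-(Real.pi / 2)) (Real.pi / 2) := ⟨by linarith, h2⟩
    have htan : Real.tan β < Real.tan w.arg := Real.strictMonoOn_tan hβmem hargmem h1
    rw [Complex.tan_arg, Real.tan_eq_sin_div_cos, div_lt_div_iff₀ hcos hre] at htan
    linarith
  · rintro ⟨hre, hlt⟩
    have h0 : w ≠ 0 := fun h => by simp [h] at hre
    have hlt2 : w.arg < Real.pi / 2 := Complex.arg_lt_pi_div_two_iff.mpr (Or.inl hre)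
    have hgt2 : -(Real.pi / 2) < w.arg := by
      have := Complex.abs_arg_lt_pi_div_two_iff.mpr (Or.inl hre)
      rw [abs_lt] at this; exact this.1
    refine ⟨h0, ?_, hlt2⟩
    have htan : Real.tan β < Real.tan w.arg := by
      rw [Complex.tan_arg, Real.tan_eq_sin_div_cos, div_lt_div_iff₀ hcos hre]
      linarith
    exact (Real.strictMonoOn_tan.lt_iff_lt hβmem ⟨hgt2, hlt2⟩).mp htan


private lemma lune_char {β : ℝ} (hβ1 : 0 < β) (hβ2 : β < Real.pi / 2) (z : ℂ) :
    z ∈ Metric.ball ((Real.cot β : ℂ) * Complex.I) (1 / Real.sin β) \ Metric.closedBall 0 1 ↔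
      (1 < Complex.normSq z ∧
        Real.sin β * (Complex.normSq z - 1) < Real.cos β * (2 * z.im)) := by
  have hs : 0 < Real.sin β := Real.sin_pos_of_pos_of_lt_pi hβ1 (by linarith [Real.pi_pos])
  have hcos : 0 < Real.cos β := Real.cos_pos_of_mem_Ioo ⟨by linarith, hβ2⟩
  have pyth := Real.sin_sq_add_cos_sq β
  have hcot : Real.cot β = Real.cos β / Real.sin β := Real.cot_eq_cos_div_sin β
  have h1 : (1 : ℝ) < ‖z‖ ↔ 1 < Complex.normSq z := by
    rw [← Complex.sq_norm]
    constructor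
    · intro h; nlinarith
    · intro h; nlinarith [norm_nonneg z]
  have h2 : dist z ((Real.cot β : ℂ) * Complex.I) < 1 / Real.sin β ↔
      Complex.normSq (z - (Real.cot β : ℂ) * Complex.I) < (1 / Real.sin β) ^ 2 := by
    rw [Complex.dist_eq, Complex.norm_def, Real.sqrt_lt' (by positivity)]
  rw [Set.mem_diff, Metric.mem_ball, Metric.mem_closedBall, dist_zero_right,
    not_le, h2, h1]
  have h3 : Complex.normSq (z - (Real.cot β : ℂ) * Complex.I) =
      Complex.normSq z - 2 * Real.cot β * z.im + Real.cot β ^ 2 := by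
    simp only [Complex.normSq_apply, Complex.sub_re, Complex.sub_im, Complex.mul_re,
      Complex.mul_im, Complex.ofReal_re, Complex.ofReal_im, Complex.I_re, Complex.I_im]
    ring
  rw [h3, hcot]
  have main : ∀ X i : ℝ,
      (X - 2 * (Real.cos β / Real.sin β) * i + (Real.cos β / Real.sin β) ^ 2
        < (1 / Real.sin β) ^ 2) ↔ Real.sin β * (X - 1) < Real.cos β * (2 * i) := by
    intro X i
    rw [← mul_lt_mul_iff_of_pos_right (pow_pos hs 2)]
    have eL : (X - 2 * (Real.cos β / Real.sin β) * i + (Real.cos β / Real.sin β) ^ 2)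
        * Real.sin β ^ 2 = X * Real.sin β ^ 2 - 2 * Real.cos β * i * Real.sin β
          + Real.cos β ^ 2 := by
      field_simp
    have eR : (1 / Real.sin β) ^ 2 * Real.sin β ^ 2 = 1 := by field_simp
    rw [eL, eR]
    constructor
    · intro h
      nlinarith [h, pyth, hs]
    · intro h
      nlinarith [h, pyth, hs]
  rw [main (Complex.normSq z) z.im]
  tauto

private lemma moeb_re_im (z : ℂ) (hz : z + 1 ≠ 0) :
    ((z - 1) / (z + 1)).re = (Complex.normSq z - 1) / Complex.normSq (z + 1) ∧
    ((z - 1) / (z + 1)).im = (2 * z.im) / Complex.normSq (z + 1) := by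
  have hd : Complex.normSq (z + 1) ≠ 0 := (Complex.normSq_pos.mpr hz).ne'
  constructor
  · rw [Complex.div_re, ← add_div]
    congr 1
    simp only [Complex.normSq_apply, Complex.sub_re, Complex.sub_im, Complex.add_re,
      Complex.add_im, Complex.one_re, Complex.one_im]
    ring
  · rw [Complex.div_im, div_sub_div_same]
    congr 1
    simp only [Complex.normSq_apply, Complex.sub_re, Complex.sub_im, Complex.add_re,
      Complex.add_im, Complex.one_re, Complex.one_im]
    ring

private lemma moeb_inv_re_im (w : ℂ) (hw : 1 - w ≠ 0) :
    Complex.normSq ((1 + w) / (1 - w)) - 1 = (4 * w.re) / Complex.normSq (1 - w) ∧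
    ((1 + w) / (1 - w)).im = (2 * w.im) / Complex.normSq (1 - w) := by
  have hd : Complex.normSq (1 - w) ≠ 0 := (Complex.normSq_pos.mpr hw).ne'
  constructor
  · rw [Complex.normSq_div, div_sub' hd]
    congr 1
    simp only [Complex.normSq_apply, Complex.sub_re, Complex.sub_im, Complex.add_re,
      Complex.add_im, Complex.one_re, Complex.one_im]
    ring
  · rw [Complex.div_im, div_sub_div_same]
    congr 1
    simp only [Complex.normSq_apply, Complex.sub_re, Complex.sub_im, Complex.add_re,
      Complex.add_im, Complex.one_re, Complex.one_im]
    ring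

private lemma lune_ne {β : ℝ} (hβ1 : 0 < β) (hβ2 : β < Real.pi / 2) (z : ℂ)
    (hz : z ∈ Metric.ball ((Real.cot β : ℂ) * Complex.I) (1 / Real.sin β) \
      Metric.closedBall 0 1) : z + 1 ≠ 0 := by
  intro h
  rw [lune_char hβ1 hβ2] at hz
  have hz' : z = -1 := by linear_combination h
  rw [hz'] at hz
  simp [Complex.normSq_apply] at hz

private lemma bij11_lem {β : ℝ} (hβ1 : 0 < β) (hβ2 : β < Real.pi / 2) :
    Set.BijOn (fun z : ℂ => (z - 1) / (z + 1))
      (Metric.ball ((Real.cot β : ℂ) * Complex.I) (1 / Real.sin β) \ Metric.closedBall 0 1)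
      {w : ℂ | w ≠ 0 ∧ β < w.arg ∧ w.arg < Real.pi / 2} := by
  have hs : 0 < Real.sin β := Real.sin_pos_of_pos_of_lt_pi hβ1 (by linarith [Real.pi_pos])
  have hcos : 0 < Real.cos β := Real.cos_pos_of_mem_Ioo ⟨by linarith, hβ2⟩
  have hL1 : ∀ z : ℂ, z ∈ Metric.ball ((Real.cot β : ℂ) * Complex.I) (1 / Real.sin β) \
      Metric.closedBall 0 1 → z + 1 ≠ 0 := by
    intro z hz h
    rw [lune_char hβ1 hβ2] at hz
    have hz' : z = -1 := by linear_combination h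
    rw [hz'] at hz
    simp [Complex.normSq_apply] at hz
  have hS1 : ∀ w : ℂ, w ∈ {w : ℂ | w ≠ 0 ∧ β < w.arg ∧ w.arg < Real.pi / 2} →
      (1 : ℂ) - w ≠ 0 ∧ 0 < w.re ∧ 0 < w.im := by
    intro w hw
    rw [Set.mem_setOf_eq, sector_char hβ1 hβ2] at hw
    obtain ⟨hre, hlt⟩ := hw
    have him : 0 < w.im := by nlinarith
    refine ⟨?_, hre, him⟩
    intro h
    have hw1 : w = 1 := by linear_combination -h
    rw [hw1] at him
    simp at him
  refine Set.InvOn.bijOn (f' := fun w : ℂ => (1 + w) / (1 - w)) ⟨?_, ?_⟩ ?_ ?_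
  · -- left inverse on L
    intro z hz
    have hz1 := hL1 z hz
    simp only
    have e1 : 1 + (z - 1) / (z + 1) = 2 * z / (z + 1) := by
      field_simp
      ring
    have e2 : 1 - (z - 1) / (z + 1) = 2 / (z + 1) := by
      field_simp
      ring
    rw [e1, e2, div_div_div_cancel_right₀ hz1, mul_div_cancel_left₀ _ (two_ne_zero)]
  · -- right inverse on S
    intro w hw
    obtain ⟨hw1, hre, him⟩ := hS1 w hw
    simp only
    have e1 : (1 + w) / (1 - w) - 1 = 2 * w / (1 - w) := by
      field_simp
      ring
    have e2 : (1 + w) / (1 - w) + 1 = 2 / (1 - w) := by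
      field_simp
      ring
    rw [e1, e2, div_div_div_cancel_right₀ hw1, mul_div_cancel_left₀ _ (two_ne_zero)]
  · -- MapsTo forward
    intro z hz
    have hz1 := hL1 z hz
    rw [lune_char hβ1 hβ2] at hz
    obtain ⟨h1, h2⟩ := hz
    obtain ⟨hre, him⟩ := moeb_re_im z hz1
    have hd : 0 < Complex.normSq (z + 1) := Complex.normSq_pos.mpr hz1
    rw [Set.mem_setOf_eq, sector_char hβ1 hβ2]
    simp only
    rw [hre, him]
    constructor
    · exact div_pos (by linarith) hd
    · rw [mul_div_assoc', mul_div_assoc', div_lt_div_iff_of_pos_right hd]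
      exact h2
  · -- MapsTo backward
    intro w hw
    obtain ⟨hw1, hre, him⟩ := hS1 w hw
    rw [Set.mem_setOf_eq, sector_char hβ1 hβ2] at hw
    obtain ⟨-, hlt⟩ := hw
    simp only
    rw [lune_char hβ1 hβ2]
    obtain ⟨hN, hI⟩ := moeb_inv_re_im w hw1
    have hd : 0 < Complex.normSq (1 - w) := Complex.normSq_pos.mpr hw1
    constructor
    · have : 0 < Complex.normSq ((1 + w) / (1 - w)) - 1 := by
        rw [hN]
        exact div_pos (by linarith) hd
      linarith
    · rw [hN, hI]
      rw [show Real.sin β * (4 * w.re / Complex.normSq (1 - w))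
          = Real.sin β * (4 * w.re) / Complex.normSq (1 - w) from mul_div_assoc' .. ,
        show Real.cos β * (2 * (2 * w.im / Complex.normSq (1 - w)))
          = Real.cos β * (2 * (2 * w.im)) / Complex.normSq (1 - w) by ring,
        div_lt_div_iff_of_pos_right hd]
      nlinarith

private lemma bij12_lem {β : ℝ} (hβ1 : 0 < β) (hβ2 : β < Real.pi / 2) :
    Set.BijOn (fun w : ℂ => w ^ 2 - 1)
      {w : ℂ | w ≠ 0 ∧ β < w.arg ∧ w.arg < Real.pi / 2}
      {z : ℂ | z ≠ -1 ∧ 2 * β < (z + 1).arg ∧ (z + 1).arg < Real.pi} := by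
  have hpi := Real.pi_pos
  have harg : ∀ w : ℂ, w ∈ {w : ℂ | w ≠ 0 ∧ β < w.arg ∧ w.arg < Real.pi / 2} →
      (w ^ 2).arg = 2 * w.arg := by
    intro w hw
    obtain ⟨h0, h1, h2⟩ := hw
    rw [sq]
    rw [Complex.arg_mul h0 h0 ⟨by linarith, by linarith⟩]
    ring
  have hT : ∀ z : ℂ, z ∈ {z : ℂ | z ≠ -1 ∧ 2 * β < (z + 1).arg ∧ (z + 1).arg < Real.pi} →
      z + 1 ≠ 0 := by
    intro z hz h
    exact hz.1 (by linear_combination h)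
  refine Set.InvOn.bijOn
    (f' := fun z : ℂ => (Real.sqrt ‖z + 1‖ : ℂ) *
      Complex.exp ((((z + 1).arg / 2 : ℝ) : ℂ) * Complex.I)) ⟨?_, ?_⟩ ?_ ?_
  · -- left inverse on S
    intro w hw
    obtain ⟨h0, h1, h2⟩ := hw
    simp only
    rw [sub_add_cancel, harg w ⟨h0, h1, h2⟩]
    rw [show (2 * w.arg / 2 : ℝ) = w.arg by ring]
    rw [norm_pow, Real.sqrt_sq (norm_nonneg w)]
    exact Complex.norm_mul_exp_arg_mul_I w
  · -- right inverse on T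
    intro z hz
    have hz1 := hT z hz
    have ha : 0 < ‖z + 1‖ := norm_pos_iff.mpr hz1
    simp only
    rw [mul_pow, ← Complex.ofReal_pow, Real.sq_sqrt ha.le, sq, ← Complex.exp_add]
    rw [show (((z + 1).arg / 2 : ℝ) : ℂ) * Complex.I + (((z + 1).arg / 2 : ℝ) : ℂ) * Complex.I
        = ((z + 1).arg : ℂ) * Complex.I by push_cast; ring]
    rw [Complex.norm_mul_exp_arg_mul_I]
    ring
  · -- MapsTo forward
    intro w hw
    obtain ⟨h0, h1, h2⟩ := hw
    have hsq : (w ^ 2 : ℂ) ≠ 0 := pow_ne_zero 2 h0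
    have e : w ^ 2 - 1 + 1 = w ^ 2 := by ring
    refine ⟨?_, ?_, ?_⟩
    · intro h
      exact hsq (by linear_combination h)
    · rw [e, harg w ⟨h0, h1, h2⟩]; linarith
    · rw [e, harg w ⟨h0, h1, h2⟩]; linarith
  · -- MapsTo backward
    intro z hz
    obtain ⟨hz0, h1, h2⟩ := hz
    have hz1 := hT z ⟨hz0, h1, h2⟩
    have ha : 0 < ‖z + 1‖ := norm_pos_iff.mpr hz1
    have hr : 0 < Real.sqrt ‖z + 1‖ := Real.sqrt_pos.mpr ha
    have hβ' : 0 < β := hβ1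
    have hargg : ((Real.sqrt ‖z + 1‖ : ℂ) *
        Complex.exp ((((z + 1).arg / 2 : ℝ) : ℂ) * Complex.I)).arg = (z + 1).arg / 2 := by
      rw [Complex.arg_real_mul _ hr, Complex.exp_mul_I]
      exact Complex.arg_cos_add_sin_mul_I ⟨by linarith, by linarith⟩
    refine ⟨?_, ?_, ?_⟩
    · exact mul_ne_zero (Complex.ofReal_ne_zero.mpr hr.ne') (Complex.exp_ne_zero _)
    · rw [hargg]; linarith
    · rw [hargg]; linarith


/-- mapping properties of `ψ₁(z) = -4z/(1+z)²` (and of the Möbius factor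
`ψ₁₁(z) = (z-1)/(z+1)`) on the lune `D(i cot β, 1/sin β) ∖ D̄(0,1)` and its mirror image. -/
theorem stmt_10 (β : ℝ) (hβ1 : 0 < β) (hβ2 : β < Real.pi / 2)
    (ψ1 ψ11 ψ12 : ℂ → ℂ)
    (hψ1 : ∀ z : ℂ, ψ1 z = -4 * z / (1 + z) ^ 2)
    (hψ11 : ∀ z : ℂ, ψ11 z = (z - 1) / (z + 1))
    (hψ12 : ∀ w : ℂ, ψ12 w = w ^ 2 - 1) :
    (∀ z : ℂ, z ≠ -1 → ψ1 z = ψ12 (ψ11 z)) ∧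
    Set.BijOn ψ11
      (Metric.ball ((Real.cot β : ℂ) * Complex.I) (1 / Real.sin β) \ Metric.closedBall 0 1)
      {w : ℂ | w ≠ 0 ∧ β < w.arg ∧ w.arg < Real.pi / 2} ∧
    Set.BijOn ψ1
      (Metric.ball ((Real.cot β : ℂ) * Complex.I) (1 / Real.sin β) \ Metric.closedBall 0 1)
      {z : ℂ | z ≠ -1 ∧ 2 * β < (z + 1).arg ∧ (z + 1).arg < Real.pi} ∧
    Set.BijOn ψ1
      (Metric.ball (-((Real.cot β : ℂ) * Complex.I)) (1 / Real.sin β) \ Metric.closedBall 0 1)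
      {z : ℂ | z ≠ -1 ∧ -Real.pi < (z + 1).arg ∧ (z + 1).arg < -(2 * β)} := by
  have hpi := Real.pi_pos
  have hψ1f : ψ1 = fun z : ℂ => -4 * z / (1 + z) ^ 2 := funext hψ1
  have hψ11f : ψ11 = fun z : ℂ => (z - 1) / (z + 1) := funext hψ11
  have hψ12f : ψ12 = fun w : ℂ => w ^ 2 - 1 := funext hψ12
  subst hψ1f hψ11f hψ12f
  -- Part (i)
  have part1 : ∀ z : ℂ, z ≠ -1 →
      (fun z : ℂ => -4 * z / (1 + z) ^ 2) z
        = (fun w : ℂ => w ^ 2 - 1) ((fun z : ℂ => (z - 1) / (z + 1)) z) := by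
    intro z hz
    have hz1 : z + 1 ≠ 0 := fun h => hz (by linear_combination h)
    simp only
    have h2 : ((1 : ℂ) + z) ≠ 0 := by rwa [add_comm]
    rw [div_pow, div_sub_one (pow_ne_zero 2 hz1), show ((1:ℂ)+z)^2 = (z+1)^2 by ring]
    congr 1
    ring
  -- Part (iii)
  have part3 : Set.BijOn (fun z : ℂ => -4 * z / (1 + z) ^ 2)
      (Metric.ball ((Real.cot β : ℂ) * Complex.I) (1 / Real.sin β) \ Metric.closedBall 0 1)
      {z : ℂ | z ≠ -1 ∧ 2 * β < (z + 1).arg ∧ (z + 1).arg < Real.pi} := by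
    refine Set.BijOn.congr ((bij12_lem hβ1 hβ2).comp (bij11_lem hβ1 hβ2)) ?_
    intro z hz
    have hz1 := lune_ne hβ1 hβ2 z hz
    have hz' : z ≠ -1 := fun h => hz1 (by rw [h]; ring)
    exact (part1 z hz').symm
  refine ⟨part1, bij11_lem hβ1 hβ2, part3, ?_⟩
  -- Part (iv): mirror image via conjugation
  set f : ℂ → ℂ := fun z : ℂ => -4 * z / (1 + z) ^ 2 with hf
  have hcomm : ∀ z : ℂ, (starRingEnd ℂ) (f z) = f ((starRingEnd ℂ) z) := by
    intro z
    simp only [hf]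
    rw [map_div₀, map_pow, map_add, map_mul, map_neg, map_one, map_ofNat]
  have hL' : ∀ z : ℂ,
      z ∈ Metric.ball (-((Real.cot β : ℂ) * Complex.I)) (1 / Real.sin β) \
          Metric.closedBall 0 1 ↔
      (starRingEnd ℂ) z ∈ Metric.ball ((Real.cot β : ℂ) * Complex.I) (1 / Real.sin β) \
          Metric.closedBall 0 1 := by
    intro z
    have hd1 : dist ((starRingEnd ℂ) z) ((Real.cot β : ℂ) * Complex.I)
        = dist z (-((Real.cot β : ℂ) * Complex.I)) := by
      rw [Complex.dist_eq, Complex.dist_eq, ← Complex.norm_conj (z - -((Real.cot β : ℂ) * Complex.I))]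
      congr 1
      rw [map_sub, map_neg, map_mul, Complex.conj_I, Complex.conj_ofReal]
      ring
    have hd2 : dist ((starRingEnd ℂ) z) 0 = dist z 0 := by
      rw [Complex.dist_eq, Complex.dist_eq, sub_zero, sub_zero, Complex.norm_conj]
    simp only [Set.mem_diff, Metric.mem_ball, Metric.mem_closedBall, hd1, hd2]
  have hT' : ∀ z : ℂ,
      z ∈ {z : ℂ | z ≠ -1 ∧ -Real.pi < (z + 1).arg ∧ (z + 1).arg < -(2 * β)} ↔
      (starRingEnd ℂ) z ∈ {z : ℂ | z ≠ -1 ∧ 2 * β < (z + 1).arg ∧ (z + 1).arg < Real.pi} := by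
    intro z
    have hne : z ≠ -1 ↔ (starRingEnd ℂ) z ≠ -1 := by
      constructor
      · intro h hc
        apply h
        have := congrArg (starRingEnd ℂ) hc
        simpa using this
      · intro h hc
        apply h
        rw [hc]
        simp
    have hargconj : ((starRingEnd ℂ) z + 1).arg
        = if (z + 1).arg = Real.pi then Real.pi else -(z + 1).arg := by
      rw [show (starRingEnd ℂ) z + 1 = (starRingEnd ℂ) (z + 1) by rw [map_add, map_one]]
      exact Complex.arg_conj (z + 1)
    simp only [Set.mem_setOf_eq, ← hne, hargconj]
    constructor
    · rintro ⟨h0, h1, h2⟩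
      have hne2 : (z + 1).arg ≠ Real.pi := by intro h; rw [h] at h2; linarith
      rw [if_neg hne2]
      exact ⟨h0, by linarith, by linarith⟩
    · rintro ⟨h0, h1, h2⟩
      by_cases hcase : (z + 1).arg = Real.pi
      · rw [if_pos hcase] at h2; linarith
      · rw [if_neg hcase] at h1 h2
        exact ⟨h0, by linarith, by linarith⟩
  refine ⟨?_, ?_, ?_⟩
  · intro z hz
    have h1 := part3.mapsTo ((hL' z).mp hz)
    rw [hT']
    show (starRingEnd ℂ) (f z) ∈ _
    rw [hcomm]
    exact h1
  · intro a ha b hb h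
    have h' : f ((starRingEnd ℂ) a) = f ((starRingEnd ℂ) b) := by
      rw [← hcomm, ← hcomm]
      exact congrArg _ h
    have := part3.injOn ((hL' a).mp ha) ((hL' b).mp hb) h'
    exact (starRingEnd ℂ).injective this
  · intro y hy
    obtain ⟨x, hx, hfx⟩ := part3.surjOn ((hT' y).mp hy)
    refine ⟨(starRingEnd ℂ) x, ?_, ?_⟩
    · rw [hL']
      simpa using hx
    · show f ((starRingEnd ℂ) x) = y
      rw [← hcomm, hfx]
      simp
end
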